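/- Let a, b ∈ ℂ with b' := Re b. Define the set K = {(x, y) ∈ ℂ × ℝ : |x| ≤ y}. Then the point (½[|a| + |a| ∧ b']⁺ · sgn(a), ½[|a| ∨ b' + b']⁺) belongs to K and is the nearest point of K to (a, b') in ℂ × ℝ ≅ ℝ³: for all (x,y) ∈ K, |a − x|² + (b' − y)² ≥ |a − ½[|a| + |a| ∧ b']⁺ sgn(a)|² + (b' − ½[|a| ∨ b' + b']⁺)². -/

import Mathlib

open Complex ComplexConjugate

theorem stmt_11 (a : ℂ) (b' : ℝ) :
    let K : Set (ℂ × ℝ) := {p | ‖p.1‖ ≤ p.2}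
    let P : ℂ × ℝ :=
      (((1 / 2 : ℝ) * max (‖a‖ + min (‖a‖) b') 0 : ℝ) *
          (a / (‖a‖ : ℂ)),
        (1 / 2 : ℝ) * max (max (‖a‖) b' + b') 0)
    P ∈ K ∧ ∀ p ∈ K,
      ‖a - P.1‖ ^ 2 + (b' - P.2) ^ 2 ≤
        ‖a - p.1‖ ^ 2 + (b' - p.2) ^ 2 := by
  intro K P
  set r := ‖a‖ with hr
  have hr0 : 0 ≤ r := norm_nonneg a
  have key : ∀ x : ℂ, (a * conj x).re ≤ r * ‖x‖ := by
    intro x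
    calc (a * conj x).re ≤ ‖a * conj x‖ := Complex.re_le_norm _
    _ = r * ‖x‖ := by rw [norm_mul, Complex.norm_conj]
  have expand : ∀ x : ℂ, ‖a - x‖ ^ 2
      = r ^ 2 + ‖x‖ ^ 2 - 2 * (a * conj x).re := by
    intro x
    rw [Complex.sq_norm, Complex.sq_norm, Complex.sq_norm, Complex.normSq_sub]
  have hPdef : P = (((1 / 2 : ℝ) * max (r + min r b') 0 : ℝ) * (a / (r : ℂ)),
      (1 / 2 : ℝ) * max (max r b' + b') 0) := rfl
  rcases le_or_gt r b' with hc1 | hc1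
  · -- P = (a, b')
    have hP1 : P.1 = a := by
      rw [hPdef]
      simp only [min_eq_left hc1, max_eq_left hc1]
      have h2 : max (r + r) 0 = 2 * r := by rw [max_eq_left (by linarith)]; ring
      rw [h2]
      by_cases h : a = 0
      · simp [h]
      · have hrne : (r : ℂ) ≠ 0 := by
          simp [hr, h]
        field_simp
    have hP2 : P.2 = b' := by
      rw [hPdef]
      simp only [max_eq_right hc1]
      rw [max_eq_left (by linarith : (0:ℝ) ≤ b' + b')]
      ring
    constructor
    · show ‖P.1‖ ≤ P.2
      rw [hP1, hP2]; exact hc1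
    · intro p hp
      rw [hP1, hP2]
      simp only [sub_self, norm_zero, ne_eq, OfNat.ofNat_ne_zero,
        not_false_eq_true, zero_pow, add_zero, zero_add]
      positivity
  · rcases le_or_gt b' (-r) with hc2 | hc2
    · -- P = (0, 0)
      have hP1 : P.1 = 0 := by
        rw [hPdef]
        have : min r b' = b' := min_eq_right (le_of_lt hc1)
        rw [this, max_eq_right (by linarith : r + b' ≤ 0)]
        simp
      have hP2 : P.2 = 0 := by
        rw [hPdef]
        have : max r b' = r := max_eq_left (le_of_lt hc1)
        rw [this, max_eq_right (by linarith : r + b' ≤ 0)]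
        ring
      constructor
      · show ‖P.1‖ ≤ P.2
        rw [hP1, hP2]; simp
      · intro p hp
        obtain ⟨x, y⟩ := p
        have hxy : ‖x‖ ≤ y := hp
        have hx0 : 0 ≤ ‖x‖ := norm_nonneg x
        rw [hP1, hP2]
        rw [expand x, expand 0]
        simp only [map_zero, mul_zero, Complex.zero_re, norm_zero]
        have hk := key x
        nlinarith [sq_nonneg (‖x‖), sq_nonneg y]
    · -- -r < b' < r, projection onto boundary
      have hrpos : 0 < r := by linarith
      have hane : a ≠ 0 :=
        norm_ne_zero_iff.mp (by rw [← hr]; exact ne_of_gt hrpos)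
      have hrne : (r : ℂ) ≠ 0 := by
        exact_mod_cast ne_of_gt hrpos
      set c := (r + b') / 2 with hcdef
      have hcpos : 0 < c := by rw [hcdef]; linarith
      have hP1 : P.1 = ((c : ℝ) : ℂ) * a / (r : ℂ) := by
        rw [hPdef]
        have h1 : min r b' = b' := min_eq_right (le_of_lt hc1)
        rw [h1, max_eq_left (by linarith : (0:ℝ) ≤ r + b'), hcdef]
        push_cast
        ring
      have hP2 : P.2 = c := by
        rw [hPdef]
        have : max r b' = r := max_eq_left (le_of_lt hc1)
        rw [this, max_eq_left (by linarith : (0:ℝ) ≤ r + b')]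
        rw [hcdef]; ring
      have habsP1 : ‖P.1‖ = c := by
        rw [hP1]
        rw [norm_div, norm_mul]
        simp [Complex.norm_real, ← hr, abs_of_pos hcpos, abs_of_pos hrpos]
        field_simp
      have hre : (a * conj P.1).re = c * r := by
        have hconj : conj P.1 = ((c : ℝ) : ℂ) * conj a / (r : ℂ) := by
          rw [hP1]; simp [map_div₀]
        rw [hconj]
        have : a * (((c : ℝ) : ℂ) * conj a / (r : ℂ))
            = ((c : ℝ) : ℂ) * (a * conj a) / (r : ℂ) := by ring
        rw [this, Complex.mul_conj]
        have hnsq : (Complex.normSq a : ℂ) = ((r ^ 2 : ℝ) : ℂ) := by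
          rw [← Complex.sq_norm]
        rw [hnsq]
        have : ((c : ℝ) : ℂ) * ((r ^ 2 : ℝ) : ℂ) / ((r : ℝ) : ℂ)
            = (((c * r ^ 2 / r : ℝ)) : ℂ) := by push_cast; ring
        rw [this, Complex.ofReal_re]
        field_simp
      constructor
      · show ‖P.1‖ ≤ P.2
        rw [habsP1, hP2]
      · intro p hp
        obtain ⟨x, y⟩ := p
        have hxy : ‖x‖ ≤ y := hp
        have hx0 : 0 ≤ ‖x‖ := norm_nonneg x
        rw [hP2]
        rw [expand x, expand P.1, habsP1, hre]
        have hk := key x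
        nlinarith [sq_nonneg (r - ‖x‖ - (y - b')),
          mul_nonneg (by linarith : (0:ℝ) ≤ y - ‖x‖)
            (by linarith : (0:ℝ) ≤ 2 * (r - b') + (y - ‖x‖))]
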